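/- arXiv:2410.11500 — 4 statements merged into one kernel-verified Lean document; each statement's English description precedes it below -/
import Mathlib

section
/- Let f₁,…,f_d be elements of a Hilbert space H with ‖g_j‖ ≤ b for each j, let w₁,…,w_d ≥ 0 with α := Σ_j w_j ≤ 1, and let f = Σ_{j=1}^d w_j g_j. Then for every integer t ≥ 1 there exist non-negative integers k₁,…,k_d with Σ_j k_j ≤ t such that ‖f − (1/t)·Σ_{j=1}^d k_j g_j‖² ≤ (α·b² − ‖f‖²)/t. -/
open Finset

local notation "⟪" x ", " y "⟫" => @inner ℝ _ _ x y

/-- Per-step existence: some choice (a `g i` or `0`) decreases the potential by at most `C`. -/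
private lemma maurey_step {H : Type*} [NormedAddCommGroup H] [InnerProductSpace ℝ H]
    (d : ℕ) (g : Fin d → H) (w : Fin d → ℝ) (f : H)
    (hw : ∀ j, 0 ≤ w j) (hα : ∑ j, w j ≤ 1)
    (hf : f = ∑ j, w j • g j) (e : H) :
    (∃ i : Fin d, 2 * ⟪e, f - g i⟫ + ‖f - g i‖ ^ 2 ≤ (∑ j, w j * ‖g j‖ ^ 2) - ‖f‖ ^ 2) ∨
      2 * ⟪e, f⟫ + ‖f‖ ^ 2 ≤ (∑ j, w j * ‖g j‖ ^ 2) - ‖f‖ ^ 2 := by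
  set C : ℝ := (∑ j, w j * ‖g j‖ ^ 2) - ‖f‖ ^ 2 with hC
  have hA : ∑ j, w j * ⟪e, g j⟫ = ⟪e, f⟫ := by
    rw [hf, inner_sum]
    exact Finset.sum_congr rfl fun j _ => (real_inner_smul_right e (g j) (w j)).symm
  have hF : ∑ j, w j * ⟪f, g j⟫ = ‖f‖ ^ 2 := by
    have h' : ∀ j, w j * ⟪f, g j⟫ = ⟪w j • g j, f⟫ := fun j => by
      rw [real_inner_smul_left, real_inner_comm]
    rw [Finset.sum_congr rfl fun j _ => h' j, ← sum_inner, ← hf,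
      real_inner_self_eq_norm_sq]
  have expand : ∀ j, w j * (2 * ⟪e, f - g j⟫ + ‖f - g j‖ ^ 2) =
      (2 * ⟪e, f⟫ + ‖f‖ ^ 2) * w j - 2 * (w j * ⟪e, g j⟫) - 2 * (w j * ⟪f, g j⟫)
        + w j * ‖g j‖ ^ 2 := by
    intro j
    rw [inner_sub_right, @norm_sub_sq_real]
    ring
  have key : (∑ j, w j * (2 * ⟪e, f - g j⟫ + ‖f - g j‖ ^ 2))
      + (1 - ∑ j, w j) * (2 * ⟪e, f⟫ + ‖f‖ ^ 2) = C := by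
    rw [Finset.sum_congr rfl fun j _ => expand j]
    rw [Finset.sum_add_distrib, Finset.sum_sub_distrib, Finset.sum_sub_distrib,
      ← Finset.mul_sum, ← Finset.mul_sum, ← Finset.mul_sum, hA, hF, hC]
    ring
  by_contra hcon
  push_neg at hcon
  obtain ⟨h1, h2⟩ := hcon
  have hge : ∀ j ∈ Finset.univ (α := Fin d),
      w j * C ≤ w j * (2 * ⟪e, f - g j⟫ + ‖f - g j‖ ^ 2) := fun j _ =>
    mul_le_mul_of_nonneg_left (le_of_lt (h1 j)) (hw j)
  have hsum : ∑ j, w j * C ≤ ∑ j, w j * (2 * ⟪e, f - g j⟫ + ‖f - g j‖ ^ 2) :=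
    Finset.sum_le_sum hge
  rw [← Finset.sum_mul] at hsum
  rcases lt_or_eq_of_le hα with h | h
  · have h2' : (1 - ∑ j, w j) * C < (1 - ∑ j, w j) * (2 * ⟪e, f⟫ + ‖f‖ ^ 2) :=
      mul_lt_mul_of_pos_left h2 (by linarith)
    nlinarith [key]
  · -- α = 1 : some weight is positive
    have hpos : ∃ j, 0 < w j := by
      by_contra hno
      push_neg at hno
      have : ∑ j, w j = 0 := le_antisymm (Finset.sum_nonpos fun j _ => hno j)
        (Finset.sum_nonneg fun j _ => hw j)
      rw [this] at h; norm_num at h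
    obtain ⟨i, hi⟩ := hpos
    have hstrict : ∑ j, w j * C < ∑ j, w j * (2 * ⟪e, f - g j⟫ + ‖f - g j‖ ^ 2) :=
      Finset.sum_lt_sum hge ⟨i, Finset.mem_univ i,
        mul_lt_mul_of_pos_left (h1 i) hi⟩
    rw [← Finset.sum_mul, h, one_mul] at hstrict
    rw [h] at key
    norm_num at key
    linarith

/-- Induction core: unnormalized version. -/
private lemma maurey_core {H : Type*} [NormedAddCommGroup H] [InnerProductSpace ℝ H]
    (d : ℕ) (g : Fin d → H) (w : Fin d → ℝ) (f : H)
    (hw : ∀ j, 0 ≤ w j) (hα : ∑ j, w j ≤ 1)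
    (hf : f = ∑ j, w j • g j) :
    ∀ t : ℕ, ∃ k : Fin d → ℕ, (∑ j, k j) ≤ t ∧
      ‖(t : ℝ) • f - ∑ j, (k j : ℝ) • g j‖ ^ 2
        ≤ (t : ℝ) * ((∑ j, w j * ‖g j‖ ^ 2) - ‖f‖ ^ 2) := by
  set C : ℝ := (∑ j, w j * ‖g j‖ ^ 2) - ‖f‖ ^ 2 with hC
  intro t
  induction t with
  | zero => exact ⟨fun _ => 0, by simp, by simp⟩
  | succ t ih =>
    obtain ⟨k, hk, hbound⟩ := ih
    set e : H := (t : ℝ) • f - ∑ j, (k j : ℝ) • g j with he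
    rcases maurey_step d g w f hw hα hf e with ⟨i, hi⟩ | h0
    · refine ⟨fun j => k j + if j = i then 1 else 0, ?_, ?_⟩
      · rw [Finset.sum_add_distrib, Finset.sum_ite_eq' Finset.univ i fun _ => 1]
        simpa using Nat.add_le_add hk (le_refl 1)
      · have hvec : ((t + 1 : ℕ) : ℝ) • f
            - ∑ j, ((k j + if j = i then 1 else 0 : ℕ) : ℝ) • g j = e + (f - g i) := by
          have : ∀ j, ((k j + if j = i then 1 else 0 : ℕ) : ℝ) • g j
              = (k j : ℝ) • g j + (if j = i then g j else 0) := by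
            intro j
            by_cases hji : j = i <;> simp [hji, add_smul]
          rw [Finset.sum_congr rfl fun j _ => this j, Finset.sum_add_distrib,
            Finset.sum_ite_eq' Finset.univ i g]
          push_cast
          rw [add_smul, he]
          simp
          abel
        rw [hvec, @norm_add_sq_real]
        push_cast
        nlinarith [hbound, hi]
    · refine ⟨k, le_trans hk (Nat.le_succ t), ?_⟩
      have hvec : ((t + 1 : ℕ) : ℝ) • f - ∑ j, (k j : ℝ) • g j = e + f := by
        push_cast
        rw [add_smul, he]
        simp
        abel
      rw [hvec, @norm_add_sq_real]
      push_cast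
      nlinarith [hbound, h0]

theorem stmt_2 {H : Type*} [NormedAddCommGroup H] [InnerProductSpace ℝ H]
    (d : ℕ) (g : Fin d → H) (w : Fin d → ℝ) (b : ℝ) (f : H)
    (hg : ∀ j, ‖g j‖ ≤ b) (hw : ∀ j, 0 ≤ w j) (hα : ∑ j, w j ≤ 1)
    (hf : f = ∑ j, w j • g j) :
    ∀ t : ℕ, 1 ≤ t → ∃ k : Fin d → ℕ, (∑ j, k j) ≤ t ∧
      ‖f - (1 / (t : ℝ)) • ∑ j, (k j : ℝ) • g j‖ ^ 2
        ≤ ((∑ j, w j) * b ^ 2 - ‖f‖ ^ 2) / (t : ℝ) := by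
  intro t ht
  obtain ⟨k, hk, hbound⟩ := maurey_core d g w f hw hα hf t
  have htpos : (0 : ℝ) < t := by exact_mod_cast ht
  refine ⟨k, hk, ?_⟩
  have hCle : (∑ j, w j * ‖g j‖ ^ 2) ≤ (∑ j, w j) * b ^ 2 := by
    rw [Finset.sum_mul]
    refine Finset.sum_le_sum fun j _ => ?_
    exact mul_le_mul_of_nonneg_left
      (pow_le_pow_left₀ (norm_nonneg _) (hg j) 2) (hw j)
  have hrw : f - (1 / (t : ℝ)) • ∑ j, (k j : ℝ) • g j
      = (1 / (t : ℝ)) • ((t : ℝ) • f - ∑ j, (k j : ℝ) • g j) := by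
    rw [smul_sub, smul_smul]
    field_simp
    rw [one_smul]
  rw [hrw, norm_smul]
  have h1 : |1 / (t : ℝ)| = 1 / (t : ℝ) := abs_of_pos (by positivity)
  rw [Real.norm_eq_abs, h1, mul_pow, le_div_iff₀ htpos]
  calc (1 / (t : ℝ)) ^ 2 * ‖(t : ℝ) • f - ∑ j, (k j : ℝ) • g j‖ ^ 2 * t
      ≤ (1 / (t : ℝ)) ^ 2 * ((t : ℝ) * ((∑ j, w j * ‖g j‖ ^ 2) - ‖f‖ ^ 2)) * t :=
        mul_le_mul_of_nonneg_right
          (mul_le_mul_of_nonneg_left hbound (by positivity)) htpos.le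
    _ = (∑ j, w j * ‖g j‖ ^ 2) - ‖f‖ ^ 2 := by field_simp
    _ ≤ (∑ j, w j) * b ^ 2 - ‖f‖ ^ 2 := by linarith
end

section
/- Let r_w ∈ ℕ₊, let V ⊂ ℝ^k be a subspace of dimension r_w with orthonormal basis matrix E ∈ ℝ^{k×r_w}, and fix p, q ∈ [1,∞) with 1/p + 1/q = 1. Let W := {W ∈ ℝ^{k×d} : col(W) ⊆ V and ‖WᵀE‖_{p,1} ≤ B_w}. Then for every ε > 0 and every x ∈ ℝ^d with ‖x‖_q ≤ B_x, the set {Wx : W ∈ W} admits an ε-cover in ℓ₂ norm of log-cardinality at most (B_x²·B_w²/ε²)·log(2·r_w + 1). -/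
lemma aux_exists_le_avg {ι : Type*} [Fintype ι] [Nonempty ι] (μ f : ι → ℝ)
    (hμ0 : ∀ u, 0 ≤ μ u) (hμ1 : ∑ u, μ u = 1) :
    ∃ u, f u ≤ ∑ u, μ u * f u := by
  by_contra h
  push_neg at h
  obtain ⟨u0, hu0⟩ : ∃ u, 0 < μ u := by
    by_contra h'
    push_neg at h'
    have : ∑ u : ι, μ u ≤ 0 := Finset.sum_nonpos (fun u _ => h' u)
    linarith
  have heq : ∑ u : ι, μ u * (∑ v : ι, μ v * f v) = ∑ v : ι, μ v * f v := by
    rw [← Finset.sum_mul, hμ1, one_mul]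
  have hlt : ∑ u : ι, μ u * (∑ v : ι, μ v * f v) < ∑ u : ι, μ u * f u := by
    apply Finset.sum_lt_sum
    · exact fun i _ => mul_le_mul_of_nonneg_left (h i).le (hμ0 i)
    · exact ⟨u0, Finset.mem_univ u0, mul_lt_mul_of_pos_left (h u0) hu0⟩
  linarith

lemma aux_maurey {n : ℕ} {ι : Type*} [Fintype ι] [Nonempty ι] (μ : ι → ℝ) (w : ι → Fin n → ℝ)
    (c : Fin n → ℝ) (K : ℝ)
    (hμ0 : ∀ u, 0 ≤ μ u) (hμ1 : ∑ u, μ u = 1)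
    (hmean : ∀ j, ∑ u, μ u * w u j = c j)
    (hK : ∑ u, μ u * (∑ j, (w u j) ^ 2) = K) :
    ∀ m : ℕ, ∃ s : Fin m → ι,
      ∑ j, ((m : ℝ) * c j - ∑ t, w (s t) j) ^ 2 ≤ m * (K - ∑ j, (c j) ^ 2) := by
  intro m
  induction m with
  | zero => exact ⟨Fin.elim0, by simp⟩
  | succ m ih =>
    obtain ⟨s, hs⟩ := ih
    set A : Fin n → ℝ := fun j => (m : ℝ) * c j - ∑ t, w (s t) j with hA
    have key : ∀ j, ∑ u, μ u * (A j + c j - w u j) ^ 2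
        = (A j + c j) ^ 2 - 2 * (A j + c j) * c j + ∑ u, μ u * (w u j) ^ 2 := by
      intro j
      have e1 : ∀ u, μ u * (A j + c j - w u j) ^ 2
          = (A j + c j) ^ 2 * μ u - 2 * (A j + c j) * (μ u * w u j) + μ u * (w u j) ^ 2 :=
        fun u => by ring
      rw [Finset.sum_congr rfl fun u _ => e1 u, Finset.sum_add_distrib,
        Finset.sum_sub_distrib, ← Finset.mul_sum, ← Finset.mul_sum, hμ1, hmean j, mul_one]
    have hsum : ∑ u, μ u * (∑ j, (A j + c j - w u j) ^ 2)
        = (∑ j, (A j) ^ 2) + (K - ∑ j, (c j) ^ 2) := by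
      calc ∑ u, μ u * (∑ j, (A j + c j - w u j) ^ 2)
          = ∑ u, ∑ j, μ u * (A j + c j - w u j) ^ 2 := by simp_rw [Finset.mul_sum]
        _ = ∑ j, ∑ u, μ u * (A j + c j - w u j) ^ 2 := Finset.sum_comm
        _ = ∑ j, ((A j + c j) ^ 2 - 2 * (A j + c j) * c j + ∑ u, μ u * (w u j) ^ 2) :=
            Finset.sum_congr rfl fun j _ => key j
        _ = ∑ j, ((A j + c j) ^ 2 - 2 * (A j + c j) * c j) + ∑ j, ∑ u, μ u * (w u j) ^ 2 :=
            Finset.sum_add_distrib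
        _ = ∑ j, ((A j + c j) ^ 2 - 2 * (A j + c j) * c j) + K := by
            rw [Finset.sum_comm]
            simp_rw [← Finset.mul_sum]
            rw [hK]
        _ = (∑ j, (A j) ^ 2) + (K - ∑ j, (c j) ^ 2) := by
            have e2 : ∀ j : Fin n, (A j + c j) ^ 2 - 2 * (A j + c j) * c j
                = (A j) ^ 2 - (c j) ^ 2 := fun j => by ring
            rw [Finset.sum_congr rfl fun j _ => e2 j, Finset.sum_sub_distrib]
            ring
    obtain ⟨u, hu⟩ := aux_exists_le_avg μ (fun u => ∑ j, (A j + c j - w u j) ^ 2) hμ0 hμ1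
    have hι : ∀ (s' : Fin (m+1) → ι), (∀ j, ∑ t, w (s' t) j = (∑ t : Fin m, w (s t) j) + w u j) →
        ∃ s' : Fin (m+1) → ι,
          ∑ j, (((m+1 : ℕ) : ℝ) * c j - ∑ t, w (s' t) j) ^ 2
            ≤ ((m+1 : ℕ) : ℝ) * (K - ∑ j, (c j) ^ 2) := by
      intro s' hsnoc
      refine ⟨s', ?_⟩
      have hAs : ∑ j, (A j) ^ 2 ≤ (m : ℝ) * (K - ∑ j, (c j) ^ 2) := hs
      have hterm : ∀ j, ((m + 1 : ℕ) : ℝ) * c j - ∑ t, w (s' t) j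
          = A j + c j - w u j := by
        intro j
        rw [hsnoc j, hA]
        push_cast
        ring
      calc ∑ j, (((m + 1 : ℕ) : ℝ) * c j - ∑ t, w (s' t) j) ^ 2
          = ∑ j, (A j + c j - w u j) ^ 2 :=
            Finset.sum_congr rfl fun j _ => by rw [hterm j]
        _ ≤ ∑ u', μ u' * (∑ j, (A j + c j - w u' j) ^ 2) := hu
        _ = (∑ j, (A j) ^ 2) + (K - ∑ j, (c j) ^ 2) := hsum
        _ ≤ (m : ℝ) * (K - ∑ j, (c j) ^ 2) + (K - ∑ j, (c j) ^ 2) :=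
            add_le_add_left hAs _
        _ = ((m + 1 : ℕ) : ℝ) * (K - ∑ j, (c j) ^ 2) := by push_cast; ring
    apply hι (Fin.snoc s u)
    intro j
    rw [Fin.sum_univ_castSucc]
    simp [Fin.snoc_castSucc, Fin.snoc_last]
open Finset

def mw (r : ℕ) (R : ℝ) (u : Option (Fin r × Bool)) (j' : Fin r) : ℝ :=
  match u with
  | none => 0
  | some (j, b) => (if b then R else -R) * (if j' = j then 1 else 0)

lemma mw_none (r : ℕ) (R : ℝ) (j' : Fin r) : mw r R none j' = 0 := rfl

lemma mw_some (r : ℕ) (R : ℝ) (j : Fin r) (b : Bool) (j' : Fin r) :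
    mw r R (some (j, b)) j' = (if b then R else -R) * (if j' = j then 1 else 0) := rfl

lemma max_add_max_neg (a : ℝ) : max a 0 + max (-a) 0 = |a| := by
  rcases le_total 0 a with h | h
  · rw [max_eq_left h, max_eq_right (by linarith), abs_of_nonneg h, add_zero]
  · rw [max_eq_right h, max_eq_left (by linarith), abs_of_nonpos h, zero_add]

lemma max_sub_max_neg (a : ℝ) : max a 0 - max (-a) 0 = a := by
  rcases le_total 0 a with h | h
  · rw [max_eq_left h, max_eq_right (by linarith), sub_zero]
  · rw [max_eq_right h, max_eq_left (by linarith), zero_sub, neg_neg]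

lemma aux_net {r : ℕ} (R : ℝ) (hR : 0 < R) (c : Fin r → ℝ) (hc : ∑ j, |c j| ≤ R) (m : ℕ) :
    ∃ s : Fin m → Option (Fin r × Bool),
      ∑ j, (c j - (m : ℝ)⁻¹ * ∑ t, mw r R (s t) j) ^ 2 ≤ R ^ 2 / (m + 1) := by
  have hRne : R ≠ 0 := ne_of_gt hR
  by_cases hcase : ∑ j, (c j) ^ 2 ≤ R ^ 2 / (m + 1)
  · exact ⟨fun _ => none, by simpa [mw_none] using hcase⟩
  push_neg at hcase
  obtain ⟨s, hs⟩ := aux_maurey (n := r) (ι := Option (Fin r × Bool))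
    (fun u => Option.elim u (1 - (∑ j, |c j|) / R)
      (fun jb => (if jb.2 then max (c jb.1) 0 else max (-(c jb.1)) 0) / R))
    (mw r R) c (R * ∑ j, |c j|)
    (by
      intro u
      rcases u with _ | ⟨j, b⟩
      · simp only [Option.elim]
        have h1 : (∑ j, |c j|) / R ≤ 1 := (div_le_one hR).mpr hc
        linarith
      · rcases b <;> simp only [Option.elim] <;>
          exact div_nonneg (le_max_right _ _) hR.le)
    (by
      rw [Fintype.sum_option, Fintype.sum_prod_type]
      simp only [Option.elim, Fintype.sum_bool, Bool.false_eq_true, if_true, if_false]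
      have h1 : ∀ j : Fin r,
          max (c j) 0 / R + max (-(c j)) 0 / R = |c j| / R := fun j => by
        rw [← add_div, max_add_max_neg]
      rw [Finset.sum_congr rfl fun j _ => h1 j, ← Finset.sum_div]
      field_simp
      ring)
    (by
      intro j
      rw [Fintype.sum_option, Fintype.sum_prod_type]
      have h0 : (fun u : Option (Fin r × Bool) => Option.elim u (1 - (∑ j, |c j|) / R)
          (fun jb => (if jb.2 then max (c jb.1) 0 else max (-(c jb.1)) 0) / R))
          none * mw r R none j = 0 := by simp [mw_none]
      rw [h0, zero_add]
      have h1 : ∀ j0 : Fin r, ∑ b : Bool,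
          (fun u : Option (Fin r × Bool) => Option.elim u (1 - (∑ j, |c j|) / R)
            (fun jb => (if jb.2 then max (c jb.1) 0 else max (-(c jb.1)) 0) / R))
            (some (j0, b)) * mw r R (some (j0, b)) j
          = (if j = j0 then 1 else 0) * c j0 := by
        intro j0
        rw [Fintype.sum_bool]
        simp only [Option.elim, mw_some, Bool.false_eq_true, if_true, if_false]
        calc max (c j0) 0 / R * (R * (if j = j0 then 1 else 0))
              + max (-(c j0)) 0 / R * (-R * (if j = j0 then 1 else 0))
            = (if j = j0 then 1 else 0) * ((max (c j0) 0 - max (-(c j0)) 0) * (R / R)) := by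
              ring
          _ = (if j = j0 then 1 else 0) * c j0 := by
              rw [div_self hRne, mul_one, max_sub_max_neg]
      rw [Finset.sum_congr rfl fun j0 _ => h1 j0]
      simp [Finset.sum_ite_eq])
    (by
      rw [Fintype.sum_option, Fintype.sum_prod_type]
      have h0 : ∀ j' : Fin r, mw r R none j' = 0 := mw_none r R
      have hsq : ∀ (j0 : Fin r) (b : Bool),
          ∑ j' : Fin r, (mw r R (some (j0, b)) j') ^ 2 = R ^ 2 := by
        intro j0 b
        have h2 : ∀ j' : Fin r, (mw r R (some (j0, b)) j') ^ 2
            = R ^ 2 * (if j' = j0 then 1 else 0) := by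
          intro j'
          rw [mw_some]
          rcases b <;> rcases eq_or_ne j' j0 <;> simp [*]
        rw [Finset.sum_congr rfl fun j' _ => h2 j', ← Finset.mul_sum]
        simp [Finset.sum_ite_eq']
      simp only [Option.elim, h0]
      rw [show ∑ j' : Fin r, (0:ℝ)^2 = 0 by simp, mul_zero, zero_add]
      have h3 : ∀ j0 : Fin r, ∑ b : Bool,
          (if b then max (c j0) 0 else max (-(c j0)) 0) / R
            * (∑ j' : Fin r, (mw r R (some (j0, b)) j') ^ 2)
          = |c j0| * R := by
        intro j0
        rw [Fintype.sum_bool, hsq j0 true, hsq j0 false]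
        simp only [Bool.false_eq_true, if_true, if_false]
        have : max (c j0) 0 / R * R ^ 2 + max (-(c j0)) 0 / R * R ^ 2
            = (max (c j0) 0 + max (-(c j0)) 0) * (R / R) * R := by ring
        rw [this, div_self hRne, mul_one, max_add_max_neg]
      rw [Finset.sum_congr rfl fun j0 _ => h3 j0, ← Finset.sum_mul]
      ring)
    m
  have hcsq : ∑ j, (c j) ^ 2 ≤ R ^ 2 := by
    have h1 : ∑ j, (c j) ^ 2 ≤ (∑ j, |c j|) ^ 2 := by
      have h2 : ∀ j : Fin r, (c j) ^ 2 ≤ |c j| * ∑ j', |c j'| := by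
        intro j
        have h3 : |c j| ≤ ∑ j', |c j'| :=
          Finset.single_le_sum (f := fun j' => |c j'|) (fun _ _ => abs_nonneg _) (Finset.mem_univ j)
        calc (c j) ^ 2 = |c j| * |c j| := by rw [pow_two, ← abs_mul_abs_self]
          _ ≤ |c j| * ∑ j', |c j'| := mul_le_mul_of_nonneg_left h3 (abs_nonneg _)
      calc ∑ j, (c j) ^ 2 ≤ ∑ j, |c j| * ∑ j', |c j'| := Finset.sum_le_sum fun j _ => h2 j
        _ = (∑ j, |c j|) ^ 2 := by rw [← Finset.sum_mul]; ring
    have h4 : (∑ j, |c j|) ^ 2 ≤ R ^ 2 :=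
      pow_le_pow_left₀ (Finset.sum_nonneg fun j _ => abs_nonneg _) hc 2
    linarith
  have hm : 1 ≤ m := by
    by_contra hm0
    push_neg at hm0
    interval_cases m
    norm_num at hcase
    linarith
  have hmR : (0 : ℝ) < m := by exact_mod_cast hm
  have hm1 : (0 : ℝ) < (m : ℝ) + 1 := by positivity
  refine ⟨s, ?_⟩
  have heq : ∑ j, (c j - (m : ℝ)⁻¹ * ∑ t, mw r R (s t) j) ^ 2
      = ((m : ℝ)⁻¹) ^ 2 * ∑ j, ((m : ℝ) * c j - ∑ t, mw r R (s t) j) ^ 2 := by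
    rw [Finset.mul_sum]
    refine Finset.sum_congr rfl fun j _ => ?_
    have h5 : c j - (m : ℝ)⁻¹ * ∑ t, mw r R (s t) j
        = (m : ℝ)⁻¹ * ((m : ℝ) * c j - ∑ t, mw r R (s t) j) := by
      have hmne : (m : ℝ) ≠ 0 := ne_of_gt hmR
      field_simp
    rw [h5, mul_pow]
  rw [heq]
  have hKb : R * ∑ j, |c j| ≤ R ^ 2 := by nlinarith
  calc ((m : ℝ)⁻¹) ^ 2 * ∑ j, ((m : ℝ) * c j - ∑ t, mw r R (s t) j) ^ 2
      ≤ ((m : ℝ)⁻¹) ^ 2 * ((m : ℝ) * (R * ∑ j, |c j| - ∑ j, (c j) ^ 2)) :=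
        mul_le_mul_of_nonneg_left hs (by positivity)
    _ = (R * ∑ j, |c j| - ∑ j, (c j) ^ 2) / m := by field_simp
    _ ≤ R ^ 2 / ((m : ℝ) + 1) := by
        rw [div_le_div_iff₀ hmR hm1]
        have h6 : R ^ 2 < (∑ j, (c j) ^ 2) * ((m : ℝ) + 1) := by
          have := (div_lt_iff₀ hm1).mp hcase
          linarith
        nlinarith
  

theorem stmt_13 (k d r_w : ℕ) (hr : 1 ≤ r_w) (B_w B_x : ℝ)
    (hBw : 0 < B_w) (hBx : 0 < B_x)
    (p q : ℝ) (hp : 1 ≤ p) (hq : 1 ≤ q) (hpq : 1 / p + 1 / q = 1)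
    (V : Submodule ℝ (Fin k → ℝ)) (hV : Module.finrank ℝ V = r_w)
    (E : Fin r_w → (Fin k → ℝ))
    (hEV : ∀ j, E j ∈ V)
    (hE : ∀ j j' : Fin r_w, (∑ i, E j i * E j' i) = if j = j' then 1 else 0)
    (ε : ℝ) (hε : 0 < ε)
    (x : Fin d → ℝ) (hx : (∑ l, |x l| ^ q) ^ (1 / q) ≤ B_x) :
    ∃ N : Finset (Fin k → ℝ),
      Real.log N.card ≤ (B_x ^ 2 * B_w ^ 2 / ε ^ 2) * Real.log (2 * (r_w : ℝ) + 1) ∧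
      ∀ W : Matrix (Fin k) (Fin d) ℝ,
        (∀ l, (fun i => W i l) ∈ V) →
        (∑ j, (∑ l, |∑ i, W i l * E j i| ^ p) ^ (1 / p)) ≤ B_w →
          ∃ v ∈ N, Real.sqrt (∑ i, (W.mulVec x i - v i) ^ 2) ≤ ε := by
  -- basic dot-product facts about the orthonormal family E
  have dotE : ∀ (g : Fin r_w → ℝ) (j : Fin r_w),
      ∑ i, (∑ jj, g jj * E jj i) * E j i = g j := by
    intro g j
    calc ∑ i, (∑ jj, g jj * E jj i) * E j i
        = ∑ i, ∑ jj, g jj * (E jj i * E j i) := by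
          refine Finset.sum_congr rfl fun i _ => ?_
          rw [Finset.sum_mul]
          exact Finset.sum_congr rfl fun jj _ => by ring
      _ = ∑ jj, g jj * ∑ i, E jj i * E j i := by
          rw [Finset.sum_comm]
          exact Finset.sum_congr rfl fun jj _ => by rw [Finset.mul_sum]
      _ = ∑ jj, g jj * (if jj = j then 1 else 0) := by
          exact Finset.sum_congr rfl fun jj _ => by rw [hE jj j]
      _ = g j := by simp [mul_ite, Finset.sum_ite_eq']
  have key2 : ∀ (dd ee : Fin r_w → ℝ),
      ∑ i, (∑ j, dd j * E j i) * (∑ j, ee j * E j i) = ∑ j, dd j * ee j := by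
    intro dd ee
    calc ∑ i, (∑ j, dd j * E j i) * (∑ j, ee j * E j i)
        = ∑ i, ∑ j, dd j * (E j i * (∑ j', ee j' * E j' i)) := by
          refine Finset.sum_congr rfl fun i _ => ?_
          rw [Finset.sum_mul]
          exact Finset.sum_congr rfl fun j _ => by ring
      _ = ∑ j, dd j * ∑ i, (∑ j', ee j' * E j' i) * E j i := by
          rw [Finset.sum_comm]
          refine Finset.sum_congr rfl fun j _ => ?_
          rw [Finset.mul_sum]
          exact Finset.sum_congr rfl fun i _ => by ring
      _ = ∑ j, dd j * ee j := Finset.sum_congr rfl fun j _ => by rw [dotE ee j]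
  -- E is a basis of V
  have hli : LinearIndependent ℝ E := by
    rw [Fintype.linearIndependent_iff]
    intro g hg j
    have h2 : ∀ i, ∑ jj, g jj * E jj i = 0 := by
      intro i
      have h3 := congrFun hg i
      simpa [Finset.sum_apply] using h3
    calc g j = ∑ i, (∑ jj, g jj * E jj i) * E j i := (dotE g j).symm
      _ = 0 := by
          rw [Finset.sum_congr rfl fun i _ => by rw [h2 i, zero_mul]]
          simp
  have hspan : Submodule.span ℝ (Set.range E) = V := by
    apply Submodule.eq_of_le_of_finrank_le (Submodule.span_le.mpr ?_) ?_
    · rintro _ ⟨j, rfl⟩; exact hEV j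
    · rw [hV, finrank_span_eq_card hli, Fintype.card_fin]
  have hexp : ∀ v ∈ V, ∀ i, v i = ∑ j, (∑ i', v i' * E j i') * E j i := by
    intro v hv i
    rw [← hspan] at hv
    obtain ⟨b, hb⟩ := (Submodule.mem_span_range_iff_exists_fun ℝ).mp hv
    have hvf : ∀ i', v i' = ∑ j, b j * E j i' := by
      intro i'
      rw [← hb]
      simp [Finset.sum_apply]
    have hcoef : ∀ j, ∑ i', v i' * E j i' = b j := by
      intro j
      rw [Finset.sum_congr rfl fun i' _ => by rw [hvf i']]
      exact dotE b j
    rw [Finset.sum_congr rfl fun j _ => by rw [hcoef j]]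
    exact hvf i
  -- setup of sizes
  set R : ℝ := B_x * B_w with hRdef
  have hR : 0 < R := by positivity
  set tval : ℝ := B_x ^ 2 * B_w ^ 2 / ε ^ 2 with htdef
  have ht : 0 < tval := by positivity
  have hRt : R ^ 2 = B_x ^ 2 * B_w ^ 2 := by rw [hRdef]; ring
  set m : ℕ := ⌈tval⌉₊ - 1 with hmdef
  have hceil1 : 1 ≤ ⌈tval⌉₊ := Nat.one_le_ceil_iff.mpr ht
  have hm1' : (m : ℝ) + 1 = (⌈tval⌉₊ : ℝ) := by
    have h1 : m + 1 = ⌈tval⌉₊ := Nat.succ_pred_eq_of_pos hceil1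
    exact_mod_cast h1
  have hmub : (m : ℝ) ≤ tval := by
    have h1 : (⌈tval⌉₊ : ℝ) < tval + 1 := Nat.ceil_lt_add_one ht.le
    linarith
  have hmlb : tval ≤ (m : ℝ) + 1 := by rw [hm1']; exact Nat.le_ceil tval
  -- the net
  refine ⟨Finset.image
    (fun s : Fin m → Option (Fin r_w × Bool) =>
      (fun i => ∑ j, ((m : ℝ)⁻¹ * ∑ t', mw r_w R (s t') j) * E j i))
    Finset.univ, ?_, ?_⟩
  · -- cardinality bound
    have hNcard : (Finset.image
        (fun s : Fin m → Option (Fin r_w × Bool) =>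
          (fun i => ∑ j, ((m : ℝ)⁻¹ * ∑ t', mw r_w R (s t') j) * E j i))
        Finset.univ).card ≤ (2 * r_w + 1) ^ m := by
      refine le_trans Finset.card_image_le ?_
      rw [Finset.card_univ]
      have h1 : Fintype.card (Fin m → Option (Fin r_w × Bool)) = (2 * r_w + 1) ^ m := by
        simp [Fintype.card_fun]
        ring_nf
      rw [h1]
    have hNpos : 0 < (Finset.image
        (fun s : Fin m → Option (Fin r_w × Bool) =>
          (fun i => ∑ j, ((m : ℝ)⁻¹ * ∑ t', mw r_w R (s t') j) * E j i))
        Finset.univ).card :=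
      Finset.card_pos.mpr (Finset.image_nonempty.mpr Finset.univ_nonempty)
    have hlog1 : (1 : ℝ) ≤ 2 * (r_w : ℝ) + 1 := by
      have : (0 : ℝ) ≤ (r_w : ℝ) := Nat.cast_nonneg r_w
      linarith
    calc Real.log (Finset.image
          (fun s : Fin m → Option (Fin r_w × Bool) =>
            (fun i => ∑ j, ((m : ℝ)⁻¹ * ∑ t', mw r_w R (s t') j) * E j i))
          Finset.univ).card
        ≤ Real.log (((2 * r_w + 1) ^ m : ℕ) : ℝ) := by
          apply Real.log_le_log (by exact_mod_cast hNpos)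
          exact_mod_cast hNcard
      _ = (m : ℝ) * Real.log (2 * (r_w : ℝ) + 1) := by
          push_cast
          rw [Real.log_pow]
      _ ≤ tval * Real.log (2 * (r_w : ℝ) + 1) :=
          mul_le_mul_of_nonneg_right hmub (Real.log_nonneg hlog1)
  · -- covering property
    intro W hWV hWB
    set c : Fin r_w → ℝ := fun j => ∑ l, (∑ i, W i l * E j i) * x l with hcdef
    have hWx : ∀ i, W.mulVec x i = ∑ j, c j * E j i := by
      intro i
      have hWil : ∀ l, W i l = ∑ j, (∑ i', W i' l * E j i') * E j i :=
        fun l => hexp _ (hWV l) i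
      calc W.mulVec x i = ∑ l, W i l * x l := by simp [Matrix.mulVec, dotProduct]
        _ = ∑ l, (∑ j, (∑ i', W i' l * E j i') * E j i) * x l :=
            Finset.sum_congr rfl fun l _ => by rw [← hWil l]
        _ = ∑ l, ∑ j, ((∑ i', W i' l * E j i') * x l) * E j i := by
            refine Finset.sum_congr rfl fun l _ => ?_
            rw [Finset.sum_mul]
            exact Finset.sum_congr rfl fun j _ => by ring
        _ = ∑ j, ∑ l, ((∑ i', W i' l * E j i') * x l) * E j i := Finset.sum_comm
        _ = ∑ j, c j * E j i := by
            refine Finset.sum_congr rfl fun j _ => ?_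
            rw [← Finset.sum_mul]
    -- Hölder's inequality
    have hq0 : 0 < q := lt_of_lt_of_le one_pos hq
    have hp0 : 0 < p := lt_of_lt_of_le one_pos hp
    have hpq' : Real.HolderConjugate p q := by
      rw [Real.holderConjugate_iff]
      constructor
      · have h1 : 0 < 1 / q := by positivity
        have h2 : 1 / p < 1 := by linarith
        rwa [div_lt_one hp0] at h2
      · rw [← one_div, ← one_div]; exact hpq
    have hxq0 : (0 : ℝ) ≤ (∑ l, |x l| ^ q) ^ (1 / q) :=
      Real.rpow_nonneg (Finset.sum_nonneg fun l _ => by positivity) _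
    have hcb : ∑ j, |c j| ≤ R := by
      have hj : ∀ j, |c j| ≤ (∑ l, |∑ i, W i l * E j i| ^ p) ^ (1 / p) * B_x := by
        intro j
        have hA0 : (0 : ℝ) ≤ (∑ l, |∑ i, W i l * E j i| ^ p) ^ (1 / p) :=
          Real.rpow_nonneg (Finset.sum_nonneg fun l _ => by positivity) _
        have h1 : |c j| ≤ ∑ l, |∑ i, W i l * E j i| * |x l| := by
          rw [hcdef]
          refine le_trans (Finset.abs_sum_le_sum_abs _ _) ?_
          exact le_of_eq (Finset.sum_congr rfl fun l _ => abs_mul _ _)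
        have h2 := Real.inner_le_Lp_mul_Lq (s := Finset.univ)
          (f := fun l => |∑ i, W i l * E j i|) (g := fun l => |x l|) hpq'
        simp only [abs_abs] at h2
        have h3 : (∑ l, |∑ i, W i l * E j i| ^ p) ^ (1 / p) * (∑ l, |x l| ^ q) ^ (1 / q)
            ≤ (∑ l, |∑ i, W i l * E j i| ^ p) ^ (1 / p) * B_x :=
          mul_le_mul_of_nonneg_left hx hA0
        linarith
      calc ∑ j, |c j|
          ≤ ∑ j, (∑ l, |∑ i, W i l * E j i| ^ p) ^ (1 / p) * B_x :=
            Finset.sum_le_sum fun j _ => hj j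
        _ = (∑ j, (∑ l, |∑ i, W i l * E j i| ^ p) ^ (1 / p)) * B_x :=
            (Finset.sum_mul _ _ _).symm
        _ ≤ B_w * B_x := mul_le_mul_of_nonneg_right hWB hBx.le
        _ = R := by rw [hRdef]; ring
    obtain ⟨s, hsnet⟩ := aux_net R hR c hcb m
    refine ⟨(fun i => ∑ j, ((m : ℝ)⁻¹ * ∑ t', mw r_w R (s t') j) * E j i),
      Finset.mem_image_of_mem _ (Finset.mem_univ s), ?_⟩
    have hdiff : ∑ i, (W.mulVec x i - ∑ j, ((m : ℝ)⁻¹ * ∑ t', mw r_w R (s t') j) * E j i) ^ 2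
        = ∑ j, (c j - (m : ℝ)⁻¹ * ∑ t', mw r_w R (s t') j) ^ 2 := by
      have h1 : ∀ i, W.mulVec x i - ∑ j, ((m : ℝ)⁻¹ * ∑ t', mw r_w R (s t') j) * E j i
          = ∑ j, (c j - (m : ℝ)⁻¹ * ∑ t', mw r_w R (s t') j) * E j i := by
        intro i
        rw [hWx i, ← Finset.sum_sub_distrib]
        exact Finset.sum_congr rfl fun j _ => by ring
      calc ∑ i, (W.mulVec x i - ∑ j, ((m : ℝ)⁻¹ * ∑ t', mw r_w R (s t') j) * E j i) ^ 2
          = ∑ i, (∑ j, (c j - (m : ℝ)⁻¹ * ∑ t', mw r_w R (s t') j) * E j i)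
              * (∑ j, (c j - (m : ℝ)⁻¹ * ∑ t', mw r_w R (s t') j) * E j i) :=
            Finset.sum_congr rfl fun i _ => by rw [h1 i, pow_two]
        _ = ∑ j, (c j - (m : ℝ)⁻¹ * ∑ t', mw r_w R (s t') j)
              * (c j - (m : ℝ)⁻¹ * ∑ t', mw r_w R (s t') j) := key2 _ _
        _ = ∑ j, (c j - (m : ℝ)⁻¹ * ∑ t', mw r_w R (s t') j) ^ 2 :=
            Finset.sum_congr rfl fun j _ => (pow_two _).symm
    rw [hdiff]
    have hm1pos : (0 : ℝ) < (m : ℝ) + 1 := by positivity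
    have hfin : ∑ j, (c j - (m : ℝ)⁻¹ * ∑ t', mw r_w R (s t') j) ^ 2 ≤ ε ^ 2 := by
      refine le_trans hsnet ?_
      rw [div_le_iff₀ hm1pos]
      have h1 : R ^ 2 / ε ^ 2 ≤ (m : ℝ) + 1 := by rw [hRt]; exact hmlb
      have h2 : R ^ 2 ≤ ((m : ℝ) + 1) * ε ^ 2 := by
        have hε2 : (0 : ℝ) < ε ^ 2 := by positivity
        calc R ^ 2 = R ^ 2 / ε ^ 2 * ε ^ 2 := by field_simp
          _ ≤ ((m : ℝ) + 1) * ε ^ 2 := mul_le_mul_of_nonneg_right h1 hε2.le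
      linarith
    calc Real.sqrt (∑ j, (c j - (m : ℝ)⁻¹ * ∑ t', mw r_w R (s t') j) ^ 2)
        ≤ Real.sqrt (ε ^ 2) := Real.sqrt_le_sqrt hfin
      _ = ε := Real.sqrt_sq hε.le
end

section
/- Let W ∈ ℝ^{k×d} with entrywise norm ‖W‖_{1,1} := Σ_{i,j}|w_{ij}| ≤ B_w, and let x ∈ ℝ^d with ‖x‖₁ ≤ B_x. Then for every ε > 0, the set {Wx : ‖W‖_{1,1} ≤ B_w} admits an ε-cover in ℓ₂ norm of log-cardinality at most (B_x²·B_w²/ε²)·log(2k + 1). -/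
open Finset

private noncomputable def pt (k : ℕ) (c : ℝ) (i : Fin k) : Fin k → ℝ :=
  fun i' => if i' = i then c else 0

private noncomputable def Acov (k : ℕ) (R : ℝ) : Finset (Fin k → ℝ) :=
  insert 0 ((Finset.univ.image (pt k R)) ∪ (Finset.univ.image (pt k (-R))))

private lemma Acov_card (k : ℕ) (R : ℝ) : (Acov k R).card ≤ 2 * k + 1 := by
  have h1 := Finset.card_insert_le (0 : Fin k → ℝ)
      ((Finset.univ.image (pt k R)) ∪ (Finset.univ.image (pt k (-R))))
  have h2 := Finset.card_union_le (Finset.univ.image (pt k R)) (Finset.univ.image (pt k (-R)))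
  have h3 := Finset.card_image_le (s := (Finset.univ : Finset (Fin k))) (f := pt k R)
  have h4 := Finset.card_image_le (s := (Finset.univ : Finset (Fin k))) (f := pt k (-R))
  simp only [Finset.card_univ, Fintype.card_fin] at h3 h4
  unfold Acov
  omega

private lemma zero_mem_Acov (k : ℕ) (R : ℝ) : (0 : Fin k → ℝ) ∈ Acov k R :=
  Finset.mem_insert_self _ _

private lemma rsign_mul_abs (a : ℝ) : |a| * Real.sign a = a := by
  rcases lt_trichotomy a 0 with h | h | h
  · rw [Real.sign_of_neg h, abs_of_neg h]; ring
  · rw [h]; simp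
  · rw [Real.sign_of_pos h, abs_of_pos h]; ring

private lemma sum_sq_le (k : ℕ) (y : Fin k → ℝ) : (∑ i, (y i)^2) ≤ (∑ i, |y i|)^2 := by
  have h : ∀ i : Fin k, (y i)^2 ≤ |y i| * (∑ i', |y i'|) := by
    intro i
    have h1 : |y i| ≤ ∑ i', |y i'| :=
      Finset.single_le_sum (f := fun i' => |y i'|) (fun _ _ => abs_nonneg _) (Finset.mem_univ i)
    calc (y i)^2 = |y i| * |y i| := by rw [sq, ← abs_mul_abs_self]
    _ ≤ |y i| * (∑ i', |y i'|) := mul_le_mul_of_nonneg_left h1 (abs_nonneg _)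
  calc (∑ i, (y i)^2) ≤ ∑ i, |y i| * (∑ i', |y i'|) := Finset.sum_le_sum (fun i _ => h i)
  _ = (∑ i, |y i|)^2 := by rw [← Finset.sum_mul]; ring

private lemma exists_step (k : ℕ) (R : ℝ) (hR : 0 < R) (y : Fin k → ℝ)
    (hy : (∑ i, |y i|) ≤ R) (w : Fin k → ℝ) :
    ∃ z ∈ Acov k R, (∑ i, (w i + z i - y i)^2)
      ≤ (∑ i, (w i)^2) + (R * (∑ i, |y i|) - ∑ i, (y i)^2) := by
  classical
  set φ : Option (Fin k) → Fin k → ℝ := fun j =>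
    match j with
    | none => 0
    | some i => pt k (R * Real.sign (y i)) i with hφ
  set p : Option (Fin k) → ℝ := fun j =>
    match j with
    | none => 1 - (∑ i, |y i|) / R
    | some i => |y i| / R with hp
  have hmem : ∀ j, φ j ∈ Acov k R := by
    intro j
    match j with
    | none => exact zero_mem_Acov k R
    | some i =>
      rcases lt_trichotomy (y i) 0 with h | h | h
      · have : φ (some i) = pt k (-R) i := by
          simp only [hφ, Real.sign_of_neg h]; ring_nf
        rw [this]
        exact Finset.mem_insert_of_mem (Finset.mem_union_right _
          (Finset.mem_image_of_mem _ (Finset.mem_univ i)))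
      · have : φ (some i) = 0 := by
          funext i'
          simp [hφ, h, Real.sign_zero, pt]
        rw [this]; exact zero_mem_Acov k R
      · have : φ (some i) = pt k R i := by
          simp only [hφ, Real.sign_of_pos h]; ring_nf
        rw [this]
        exact Finset.mem_insert_of_mem (Finset.mem_union_left _
          (Finset.mem_image_of_mem _ (Finset.mem_univ i)))
  have hp0 : ∀ j, 0 ≤ p j := by
    intro j
    match j with
    | none =>
      simp only [hp]
      have : (∑ i, |y i|) / R ≤ 1 := by
        rw [div_le_one hR]; exact hy
      linarith
    | some i => exact div_nonneg (abs_nonneg _) hR.le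
  have hp1 : ∑ j, p j = 1 := by
    rw [Fintype.sum_option]
    simp only [hp]
    rw [← Finset.sum_div]
    field_simp
    ring
  have hmean : ∀ i, (∑ j, p j * φ j i) = y i := by
    intro i
    rw [Fintype.sum_option]
    simp only [hp, hφ, Pi.zero_apply, mul_zero, zero_add, pt]
    have hterm : ∀ i' : Fin k, |y i'| / R * (if i = i' then R * Real.sign (y i') else 0)
        = if i = i' then |y i'| * Real.sign (y i') else 0 := by
      intro i'
      split_ifs with h
      · field_simp
      · ring
    rw [Finset.sum_congr rfl (fun i' _ => hterm i')]
    rw [Finset.sum_ite_eq]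
    simp only [Finset.mem_univ, if_true]
    exact rsign_mul_abs (y i)
  have hsq : (∑ j, p j * (∑ i, (φ j i)^2)) = R * (∑ i, |y i|) := by
    rw [Fintype.sum_option]
    simp only [hp, hφ, Pi.zero_apply]
    have h0 : (∑ _i : Fin k, (0:ℝ)^2) = 0 := by simp
    rw [h0, mul_zero, zero_add]
    have hterm : ∀ i' : Fin k,
        |y i'| / R * (∑ i, (pt k (R * Real.sign (y i')) i' i)^2) = R * |y i'| := by
      intro i'
      have hin : (∑ i, (pt k (R * Real.sign (y i')) i' i)^2)
          = (R * Real.sign (y i'))^2 := by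
        have h1 : ∀ i : Fin k, (pt k (R * Real.sign (y i')) i' i)^2
            = if i = i' then (R * Real.sign (y i'))^2 else 0 := by
          intro i
          simp only [pt]
          split_ifs with h
          · rfl
          · exact zero_pow two_ne_zero
        rw [Finset.sum_congr rfl (fun i _ => h1 i), Finset.sum_ite_eq']
        simp
      rw [hin]
      rcases lt_trichotomy (y i') 0 with h | h | h
      · rw [Real.sign_of_neg h]; field_simp
      · rw [h]; simp
      · rw [Real.sign_of_pos h]; field_simp
    rw [Finset.sum_congr rfl (fun i' _ => hterm i')]
    rw [← Finset.mul_sum]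
  have hE : (∑ j, p j * (∑ i, (w i + φ j i - y i)^2))
      = (∑ i, (w i)^2) + (R * (∑ i, |y i|) - ∑ i, (y i)^2) := by
    have h1 : (∑ j, p j * (∑ i, (w i - y i)^2)) = ∑ i, (w i - y i)^2 := by
      rw [← Finset.sum_mul, hp1, one_mul]
    have hcross : (∑ j, p j * (∑ i, (2 * (w i - y i)) * φ j i))
        = ∑ i, (2 * (w i - y i)) * y i := by
      have hswap : ∀ j : Option (Fin k), p j * (∑ i, (2 * (w i - y i)) * φ j i)
          = ∑ i, (2 * (w i - y i)) * (p j * φ j i) := by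
        intro j
        rw [Finset.mul_sum]
        exact Finset.sum_congr rfl (fun i _ => by ring)
      rw [Finset.sum_congr rfl (fun j _ => hswap j), Finset.sum_comm]
      refine Finset.sum_congr rfl (fun i _ => ?_)
      rw [← Finset.mul_sum, hmean i]
    have expand : ∀ j, p j * (∑ i, (w i + φ j i - y i)^2)
        = p j * (∑ i, (w i - y i)^2) + p j * (∑ i, (2 * (w i - y i)) * φ j i)
          + p j * (∑ i, (φ j i)^2) := by
      intro j
      have : (∑ i, (w i + φ j i - y i)^2)
          = (∑ i, (w i - y i)^2) + (∑ i, (2 * (w i - y i)) * φ j i)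
            + (∑ i, (φ j i)^2) := by
        rw [← Finset.sum_add_distrib, ← Finset.sum_add_distrib]
        exact Finset.sum_congr rfl (fun i _ => by ring)
      rw [this]; ring
    rw [Finset.sum_congr rfl (fun j _ => expand j), Finset.sum_add_distrib,
      Finset.sum_add_distrib, h1, hcross, hsq]
    have : (∑ i, (w i - y i)^2) + (∑ i, (2 * (w i - y i)) * y i)
        = (∑ i, (w i)^2) - (∑ i, (y i)^2) := by
      rw [← Finset.sum_add_distrib, ← Finset.sum_sub_distrib]
      exact Finset.sum_congr rfl (fun i _ => by ring)
    linarith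
  by_contra hcon
  push_neg at hcon
  set c := (∑ i, (w i)^2) + (R * (∑ i, |y i|) - ∑ i, (y i)^2) with hc
  have hlt : ∀ j, c < ∑ i, (w i + φ j i - y i)^2 := fun j => hcon (φ j) (hmem j)
  obtain ⟨j0, hj0⟩ : ∃ j, 0 < p j := by
    by_contra hall
    push_neg at hall
    have : (∑ j, p j) = 0 :=
      Finset.sum_eq_zero (fun j _ => le_antisymm (hall j) (hp0 j))
    rw [hp1] at this; norm_num at this
  have hstrict : (∑ j, p j * c) < ∑ j, p j * (∑ i, (w i + φ j i - y i)^2) := by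
    apply Finset.sum_lt_sum
    · intro j _
      exact mul_le_mul_of_nonneg_left (hlt j).le (hp0 j)
    · exact ⟨j0, Finset.mem_univ j0, mul_lt_mul_of_pos_left (hlt j0) hj0⟩
  rw [hE] at hstrict
  rw [← Finset.sum_mul, hp1, one_mul] at hstrict
  exact lt_irrefl c hstrict

private lemma exists_sum (k : ℕ) (R : ℝ) (hR : 0 < R) (y : Fin k → ℝ)
    (hy : (∑ i, |y i|) ≤ R) :
    ∀ n : ℕ, ∃ g : Fin n → (Fin k → ℝ), (∀ j, g j ∈ Acov k R) ∧
      (∑ i, ((∑ j, g j i) - n * y i)^2)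
        ≤ n * (R * (∑ i, |y i|) - ∑ i, (y i)^2) := by
  intro n
  induction n with
  | zero =>
    refine ⟨fun j => Fin.elim0 j, fun j => Fin.elim0 j, ?_⟩
    simp
  | succ n ih =>
    obtain ⟨g, hg, hb⟩ := ih
    obtain ⟨z, hz, hzb⟩ := exists_step k R hR y hy (fun i => (∑ j, g j i) - n * y i)
    set g' : Fin (n+1) → Fin k → ℝ := Fin.snoc g z with hg'def
    refine ⟨g', ?_, ?_⟩
    · intro j
      rcases Fin.eq_castSucc_or_eq_last j with ⟨j', rfl⟩ | rfl
      · rw [hg'def, Fin.snoc_castSucc]; exact hg j'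
      · rw [hg'def, Fin.snoc_last]; exact hz
    · have hsum : ∀ i, (∑ j : Fin (n+1), g' j i)
          = (∑ j : Fin n, g j i) + z i := by
        intro i
        rw [Fin.sum_univ_castSucc]
        simp [hg'def, Fin.snoc_castSucc, Fin.snoc_last]
      have heq : (∑ i, ((∑ j : Fin (n+1), g' j i) - ((n:ℝ)+1) * y i)^2)
          = ∑ i, (((∑ j : Fin n, g j i) - n * y i) + z i - y i)^2 := by
        refine Finset.sum_congr rfl (fun i _ => ?_)
        rw [hsum i]
        ring
      push_cast
      rw [heq]
      calc (∑ i, (((∑ j : Fin n, g j i) - n * y i) + z i - y i)^2)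
          ≤ (∑ i, ((∑ j : Fin n, g j i) - n * y i)^2)
            + (R * (∑ i, |y i|) - ∑ i, (y i)^2) := hzb
        _ ≤ (n:ℝ) * (R * (∑ i, |y i|) - ∑ i, (y i)^2)
            + (R * (∑ i, |y i|) - ∑ i, (y i)^2) := by linarith
        _ = ((n:ℝ)+1) * (R * (∑ i, |y i|) - ∑ i, (y i)^2) := by ring

theorem stmt_14 (k d : ℕ) (B_w B_x : ℝ) (hBw : 0 < B_w) (hBx : 0 < B_x)
    (ε : ℝ) (hε : 0 < ε)
    (x : Fin d → ℝ) (hx : (∑ l, |x l|) ≤ B_x) :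
    ∃ N : Finset (Fin k → ℝ),
      Real.log N.card ≤ (B_x ^ 2 * B_w ^ 2 / ε ^ 2) * Real.log (2 * (k : ℝ) + 1) ∧
      ∀ W : Matrix (Fin k) (Fin d) ℝ,
        (∑ i, ∑ l, |W i l|) ≤ B_w →
          ∃ v ∈ N, Real.sqrt (∑ i, (W.mulVec x i - v i) ^ 2) ≤ ε := by
  classical
  set R : ℝ := B_x * B_w with hRdef
  have hR : 0 < R := mul_pos hBx hBw
  set t : ℝ := R^2 / ε^2 with htdef
  have ht0 : 0 ≤ t := div_nonneg (sq_nonneg _) (sq_nonneg _)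
  set n : ℕ := ⌊t⌋₊ with hndef
  set N : Finset (Fin k → ℝ) :=
    (Fintype.piFinset (fun _ : Fin n => Acov k R)).image
      (fun g => fun i => (∑ j, g j i) / n) with hNdef
  have hzeromem : (fun _ : Fin k => (0:ℝ)) ∈ N := by
    rw [hNdef]
    refine Finset.mem_image.2 ⟨fun _ => 0, ?_, ?_⟩
    · exact Fintype.mem_piFinset.2 (fun _ => zero_mem_Acov k R)
    · funext i; simp
  refine ⟨N, ?_, ?_⟩
  · -- cardinality bound
    have hcard : N.card ≤ (2 * k + 1) ^ n := by
      calc N.card ≤ (Fintype.piFinset (fun _ : Fin n => Acov k R)).card :=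
            Finset.card_image_le
        _ = ∏ _j : Fin n, (Acov k R).card := by
            rw [Fintype.card_piFinset]
        _ = (Acov k R).card ^ n := by
            rw [Finset.prod_const, Finset.card_univ, Fintype.card_fin]
        _ ≤ (2 * k + 1) ^ n := Nat.pow_le_pow_left (Acov_card k R) n
    have hpos : (0:ℝ) < N.card := by
      have : 0 < N.card := Finset.card_pos.2 ⟨_, hzeromem⟩
      exact_mod_cast this
    have hlog1 : Real.log N.card ≤ Real.log ((2 * (k:ℝ) + 1) ^ n) := by
      apply Real.log_le_log hpos
      have : ((2 * k + 1 : ℕ) : ℝ) = 2 * (k:ℝ) + 1 := by push_cast; ring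
      rw [← this]
      exact_mod_cast hcard
    rw [Real.log_pow] at hlog1
    have hlognn : 0 ≤ Real.log (2 * (k:ℝ) + 1) := by
      apply Real.log_nonneg
      have : (0:ℝ) ≤ (k:ℝ) := Nat.cast_nonneg k
      linarith
    have hnt : (n:ℝ) ≤ t := Nat.floor_le ht0
    calc Real.log N.card ≤ (n:ℝ) * Real.log (2 * (k:ℝ) + 1) := hlog1
      _ ≤ t * Real.log (2 * (k:ℝ) + 1) := mul_le_mul_of_nonneg_right hnt hlognn
      _ = (B_x ^ 2 * B_w ^ 2 / ε ^ 2) * Real.log (2 * (k:ℝ) + 1) := by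
          rw [htdef, hRdef]; ring_nf
  · -- covering
    intro W hW
    set y : Fin k → ℝ := W.mulVec x with hydef
    have hy : (∑ i, |y i|) ≤ R := by
      have h1 : ∀ i, |y i| ≤ ∑ l, |W i l| * B_x := by
        intro i
        calc |y i| = |∑ l, W i l * x l| := by rw [hydef]; rfl
          _ ≤ ∑ l, |W i l * x l| := Finset.abs_sum_le_sum_abs _ _
          _ = ∑ l, |W i l| * |x l| := by
              exact Finset.sum_congr rfl (fun l _ => abs_mul _ _)
          _ ≤ ∑ l, |W i l| * B_x := by
              refine Finset.sum_le_sum (fun l _ => ?_)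
              refine mul_le_mul_of_nonneg_left ?_ (abs_nonneg _)
              calc |x l| ≤ ∑ l', |x l'| :=
                    Finset.single_le_sum (f := fun l' => |x l'|)
                      (fun _ _ => abs_nonneg _) (Finset.mem_univ l)
                _ ≤ B_x := hx
      calc (∑ i, |y i|) ≤ ∑ i, ∑ l, |W i l| * B_x := Finset.sum_le_sum (fun i _ => h1 i)
        _ = (∑ i, ∑ l, |W i l|) * B_x := by
            rw [Finset.sum_mul]
            exact Finset.sum_congr rfl (fun i _ => by rw [Finset.sum_mul])
        _ ≤ B_w * B_x := by
            refine mul_le_mul_of_nonneg_right hW hBx.le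
        _ = R := by rw [hRdef]; ring
    by_cases hsmall : (∑ i, (y i)^2) ≤ ε^2
    · refine ⟨fun _ => 0, hzeromem, ?_⟩
      have : (∑ i, (W.mulVec x i - 0) ^ 2) = ∑ i, (y i)^2 := by
        exact Finset.sum_congr rfl (fun i _ => by rw [hydef]; ring)
      rw [this]
      calc Real.sqrt (∑ i, (y i)^2) ≤ Real.sqrt (ε^2) := Real.sqrt_le_sqrt hsmall
        _ = ε := Real.sqrt_sq hε.le
    · push_neg at hsmall
      have hyR : (∑ i, (y i)^2) ≤ R^2 := by
        calc (∑ i, (y i)^2) ≤ (∑ i, |y i|)^2 := sum_sq_le k y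
          _ ≤ R^2 := by
            refine pow_le_pow_left₀ ?_ hy 2
            exact Finset.sum_nonneg (fun i _ => abs_nonneg _)
      have hεR : ε^2 < R^2 := lt_of_lt_of_le hsmall hyR
      have ht1 : 1 < t := by
        rw [htdef, lt_div_iff₀ (by positivity)]
        linarith
      have hn1 : 1 ≤ n := by
        rw [hndef]
        exact Nat.le_floor (by exact_mod_cast ht1.le)
      have hnpos : (0:ℝ) < (n:ℝ) := by exact_mod_cast hn1
      have htlt : t < (n:ℝ) + 1 := by
        rw [hndef]
        exact_mod_cast Nat.lt_floor_add_one t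
      obtain ⟨g, hg, hb⟩ := exists_sum k R hR y hy n
      set v : Fin k → ℝ := fun i => (∑ j, g j i) / n with hvdef
      have hvmem : v ∈ N := by
        rw [hNdef]
        exact Finset.mem_image.2 ⟨g, Fintype.mem_piFinset.2 (fun j => hg j), rfl⟩
      refine ⟨v, hvmem, ?_⟩
      have herr : (∑ i, (W.mulVec x i - v i) ^ 2)
          = (∑ i, ((∑ j, g j i) - n * y i)^2) / (n:ℝ)^2 := by
        have hne : (n:ℝ) ≠ 0 := hnpos.ne'
        rw [Finset.sum_div]
        refine Finset.sum_congr rfl (fun i _ => ?_)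
        have hvi : v i = (∑ j, g j i) / n := rfl
        have hyi : W.mulVec x i = y i := rfl
        rw [hvi, hyi]
        field_simp
        ring
      have hV : R * (∑ i, |y i|) - (∑ i, (y i)^2) < (n:ℝ) * ε^2 := by
        have h1 : R * (∑ i, |y i|) ≤ R * R := mul_le_mul_of_nonneg_left hy hR.le
        have h2 : R * R < ((n:ℝ) + 1) * ε^2 := by
          have : R^2 < ((n:ℝ)+1) * ε^2 := by
            rw [htdef] at htlt
            have := (div_lt_iff₀ (by positivity : (0:ℝ) < ε^2)).1 htlt
            linarith
          nlinarith [this]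
        nlinarith [hsmall]
      have hfin : (∑ i, (W.mulVec x i - v i) ^ 2) ≤ ε^2 := by
        rw [herr]
        rw [div_le_iff₀ (by positivity)]
        calc (∑ i, ((∑ j, g j i) - n * y i)^2)
            ≤ (n:ℝ) * (R * (∑ i, |y i|) - ∑ i, (y i)^2) := hb
          _ ≤ (n:ℝ) * ((n:ℝ) * ε^2) := by
              refine mul_le_mul_of_nonneg_left hV.le hnpos.le
          _ ≤ ε^2 * (n:ℝ)^2 := by ring_nf; linarith [sq_nonneg ((n:ℝ) * ε)]
      calc Real.sqrt (∑ i, (W.mulVec x i - v i) ^ 2) ≤ Real.sqrt (ε^2) :=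
            Real.sqrt_le_sqrt hfin
        _ = ε := Real.sqrt_sq hε.le
end

section
/- The softmax function on ℝ^T is 2-Lipschitz from the ℓ_∞ norm to the ℓ₁ norm: for all u, v ∈ ℝ^T, ‖softmax(u) − softmax(v)‖₁ ≤ 2·‖u − v‖_∞. -/
noncomputable def softmax {T : ℕ} (u : Fin T → ℝ) : Fin T → ℝ :=
  fun i => Real.exp (u i) / ∑ j, Real.exp (u j)

/-- `tanh x ≤ x` in the form `1 - e^{-2x} ≤ x (1 + e^{-2x})` for `x ≥ 0`. -/
lemma one_sub_exp_le (x : ℝ) (hx : 0 ≤ x) :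
    1 - Real.exp (-(2 * x)) ≤ x * (1 + Real.exp (-(2 * x))) := by
  set f : ℝ → ℝ := fun t => t * (1 + Real.exp (-(2 * t))) + Real.exp (-(2 * t)) with hf
  have hder : ∀ t : ℝ, HasDerivAt f (1 - Real.exp (-(2 * t)) * (1 + 2 * t)) t := by
    intro t
    have hE : HasDerivAt (fun t : ℝ => Real.exp (-(2 * t))) (Real.exp (-(2 * t)) * (-2)) t := by
      have h1 : HasDerivAt (fun t : ℝ => -(2 * t)) (-2) t := by
        simpa using ((hasDerivAt_id t).const_mul (2 : ℝ)).fun_neg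
      exact (Real.hasDerivAt_exp _).comp t h1
    have h2 := (hasDerivAt_id t).fun_mul ((hasDerivAt_const t (1 : ℝ)).fun_add hE)
    have := h2.fun_add hE
    refine this.congr_deriv ?_
    simp only [id_eq]
    ring
  have hmono : MonotoneOn f (Set.Ici (0 : ℝ)) := by
    apply monotoneOn_of_deriv_nonneg (convex_Ici 0)
    · exact fun t _ => ((hder t).continuousAt).continuousWithinAt
    · exact fun t _ => ((hder t).differentiableAt).differentiableWithinAt
    · intro t _
      rw [(hder t).deriv]
      have h1 : (1 + 2 * t) ≤ Real.exp (2 * t) := by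
        simpa [add_comm] using Real.add_one_le_exp (2 * t)
      have h2 : Real.exp (-(2 * t)) * (1 + 2 * t) ≤ Real.exp (-(2 * t)) * Real.exp (2 * t) :=
        mul_le_mul_of_nonneg_left h1 (Real.exp_pos _).le
      rw [← Real.exp_add] at h2
      simp only [neg_add_cancel, Real.exp_zero] at h2
      linarith
  have h0 : f 0 ≤ f x := hmono (Set.self_mem_Ici) (Set.mem_Ici.2 hx) hx
  simp only [hf, zero_mul, mul_zero, neg_zero, Real.exp_zero, zero_add] at h0
  linarith

lemma softmax_pos {T : ℕ} (hT : 0 < T) (u : Fin T → ℝ) (i : Fin T) : 0 < softmax u i := by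
  have hS : 0 < ∑ j, Real.exp (u j) :=
    Finset.sum_pos (fun j _ => Real.exp_pos _) ⟨⟨0, hT⟩, Finset.mem_univ _⟩
  exact div_pos (Real.exp_pos _) hS

lemma softmax_sum_one {T : ℕ} (hT : 0 < T) (u : Fin T → ℝ) : ∑ i, softmax u i = 1 := by
  have hS : 0 < ∑ j, Real.exp (u j) :=
    Finset.sum_pos (fun j _ => Real.exp_pos _) ⟨⟨0, hT⟩, Finset.mem_univ _⟩
  simp only [softmax]
  rw [← Finset.sum_div, div_self hS.ne']

/-- Ratio bound: if all coordinates of `u - v` are within `ε`, then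
`softmax v i ≥ e^{-2ε} softmax u i`. -/
lemma softmax_ratio {T : ℕ} (hT : 0 < T) (u v : Fin T → ℝ) (ε : ℝ)
    (h : ∀ i, |u i - v i| ≤ ε) (i : Fin T) :
    Real.exp (-(2 * ε)) * softmax u i ≤ softmax v i := by
  have hSu : 0 < ∑ j, Real.exp (u j) :=
    Finset.sum_pos (fun j _ => Real.exp_pos _) ⟨⟨0, hT⟩, Finset.mem_univ _⟩
  have hSv : 0 < ∑ j, Real.exp (v j) :=
    Finset.sum_pos (fun j _ => Real.exp_pos _) ⟨⟨0, hT⟩, Finset.mem_univ _⟩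
  have h1 : Real.exp (u i - ε) ≤ Real.exp (v i) := by
    apply Real.exp_le_exp.2
    have := abs_le.1 (h i)
    linarith [this.1, this.2]
  have h2 : (∑ j, Real.exp (v j)) ≤ Real.exp ε * ∑ j, Real.exp (u j) := by
    rw [Finset.mul_sum]
    apply Finset.sum_le_sum
    intro j _
    rw [← Real.exp_add]
    apply Real.exp_le_exp.2
    have := abs_le.1 (h j)
    linarith [this.1, this.2]
  have key : Real.exp (u i - ε) / (Real.exp ε * ∑ j, Real.exp (u j)) ≤ softmax v i :=
    div_le_div₀ (Real.exp_pos _).le h1 hSv h2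
  refine le_trans (le_of_eq ?_) key
  unfold softmax
  have hrw : Real.exp (u i - ε) = Real.exp (-(2 * ε)) * Real.exp (u i) * Real.exp ε := by
    rw [← Real.exp_add, ← Real.exp_add]
    ring_nf
  rw [hrw]
  field_simp

theorem stmt_19 (T : ℕ) (hT : 0 < T) (u v : Fin T → ℝ) :
    (∑ i, |softmax u i - softmax v i|)
      ≤ 2 * Finset.univ.sup' ⟨⟨0, hT⟩, Finset.mem_univ _⟩ (fun i => |u i - v i|) := by
  classical
  set ε := Finset.univ.sup' ⟨⟨0, hT⟩, Finset.mem_univ _⟩ (fun i => |u i - v i|) with hεdef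
  have hεle : ∀ i, |u i - v i| ≤ ε := by
    intro i
    rw [hεdef]
    exact Finset.le_sup' (fun j => |u j - v j|) (Finset.mem_univ i)
  have hε0 : 0 ≤ ε := le_trans (abs_nonneg _) (hεle ⟨0, hT⟩)
  set E := Real.exp (-(2 * ε)) with hE
  have hE0 : 0 < E := Real.exp_pos _
  have hE1 : E ≤ 1 := Real.exp_le_one_iff.2 (by linarith)
  have hr1 : ∀ i, E * softmax u i ≤ softmax v i := softmax_ratio hT u v ε hεle
  have hr2 : ∀ i, E * softmax v i ≤ softmax u i := by
    apply softmax_ratio hT v u ε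
    intro i
    rw [abs_sub_comm]
    exact hεle i
  -- pointwise bound
  have hpt : ∀ i, |softmax u i - softmax v i| ≤ (1 - E) * max (softmax u i) (softmax v i) := by
    intro i
    rcases le_total (softmax v i) (softmax u i) with hle | hle
    · rw [abs_of_nonneg (by linarith), max_eq_left hle]
      have := hr1 i
      nlinarith
    · rw [abs_of_nonpos (by linarith), max_eq_right hle]
      have := hr2 i
      nlinarith
  set s := ∑ i, |softmax u i - softmax v i| with hs
  have hs0 : 0 ≤ s := Finset.sum_nonneg fun i _ => abs_nonneg _
  have hmaxsum : ∑ i, max (softmax u i) (softmax v i) = 1 + s / 2 := by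
    have hmax : ∀ a b : ℝ, max a b = (a + b + |a - b|) / 2 := by
      intro a b
      rcases le_total a b with h | h
      · rw [max_eq_right h, abs_of_nonpos (by linarith)]; ring
      · rw [max_eq_left h, abs_of_nonneg (by linarith)]; ring
    calc ∑ i, max (softmax u i) (softmax v i)
        = ∑ i, (softmax u i + softmax v i + |softmax u i - softmax v i|) / 2 := by
          apply Finset.sum_congr rfl; intro i _; exact hmax _ _
      _ = ((∑ i, softmax u i) + (∑ i, softmax v i) + s) / 2 := by
          rw [← Finset.sum_div]
          congr 1
          rw [Finset.sum_add_distrib, Finset.sum_add_distrib]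
      _ = 1 + s / 2 := by rw [softmax_sum_one hT, softmax_sum_one hT]; ring
  have hsum : s ≤ (1 - E) * (1 + s / 2) := by
    calc s ≤ ∑ i, (1 - E) * max (softmax u i) (softmax v i) :=
          Finset.sum_le_sum fun i _ => hpt i
      _ = (1 - E) * (1 + s / 2) := by rw [← Finset.mul_sum, hmaxsum]
  have htanh : 1 - E ≤ ε * (1 + E) := one_sub_exp_le ε hε0
  nlinarith [hsum, htanh, hE0, hs0]
end
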